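/- Every finite chordal graph with at least one vertex has a simplicial vertex. -/

import Mathlib

def SimpleGraph.IsSimplicialVertex {V : Type*} (G : SimpleGraph V) (v : V) : Prop :=
  G.IsClique (G.neighborSet v)

def SimpleGraph.IsChordal {V : Type*} (G : SimpleGraph V) : Prop :=
  ∀ (v : V) (w : G.Walk v v), w.IsCycle → 4 ≤ w.length →
    ∃ a b, a ∈ w.support ∧ b ∈ w.support ∧ G.Adj a b ∧ s(a, b) ∉ w.edges

def SimpleGraph.IsPEO {V : Type*} [Fintype V] (G : SimpleGraph V)
    (e : Fin (Fintype.card V) ≃ V) : Prop :=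
  ∀ i : Fin (Fintype.card V),
    (G.induce {x | ∃ j, i ≤ j ∧ e j = x}).IsSimplicialVertex ⟨e i, ⟨i, le_refl i, rfl⟩⟩

namespace SimpleGraph

variable {V : Type*} {G : SimpleGraph V}

/-- Reachability by a walk all of whose vertices (including endpoints) avoid `S`. -/
def Reach (G : SimpleGraph V) (S : Set V) (u v : V) : Prop :=
  ∃ w : G.Walk u v, ∀ z ∈ w.support, z ∉ S

namespace Reach

variable {S : Set V} {u v x : V}

lemma not_mem_left (h : G.Reach S u v) : u ∉ S := by
  obtain ⟨w, hw⟩ := h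
  exact hw u w.start_mem_support

lemma not_mem_right (h : G.Reach S u v) : v ∉ S := by
  obtain ⟨w, hw⟩ := h
  exact hw v w.end_mem_support

lemma refl (h : u ∉ S) : G.Reach S u u :=
  ⟨Walk.nil, by simpa using h⟩

lemma symm (h : G.Reach S u v) : G.Reach S v u := by
  obtain ⟨w, hw⟩ := h
  exact ⟨w.reverse, by simpa [Walk.support_reverse] using hw⟩

lemma trans {w : V} (h1 : G.Reach S u v) (h2 : G.Reach S v w) : G.Reach S u w := by
  obtain ⟨p, hp⟩ := h1
  obtain ⟨q, hq⟩ := h2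
  refine ⟨p.append q, fun z hz => ?_⟩
  rcases (Walk.mem_support_append_iff p q).mp hz with h | h
  · exact hp z h
  · exact hq z h

lemma adj (hu : u ∉ S) (hv : v ∉ S) (h : G.Adj u v) : G.Reach S u v :=
  ⟨Walk.cons h Walk.nil, by
    intro z hz
    simp only [Walk.support_cons, Walk.support_nil, List.mem_cons, List.mem_singleton] at hz
    rcases hz with rfl | rfl | h'
    · exact hu
    · exact hv
    · exact absurd h' List.not_mem_nil⟩

end Reach

lemma reach_of_mem_support {S : Set V} {u v x : V} {w : G.Walk u v}
    (hw : ∀ z ∈ w.support, z ∉ S) (hx : x ∈ w.support) : G.Reach S u x := by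
  classical
  exact ⟨w.takeUntil x hx, fun z hz => hw z (w.support_takeUntil_subset hx hz)⟩


lemma splice_head {x y v : V} (p : G.Walk x y) (hxv : G.Adj x v) (hv : v ∈ p.support)
    (he : s(x, v) ∉ p.edges) :
    ∃ q : G.Walk x y, q.length < p.length ∧ ∀ w ∈ q.support, w ∈ p.support := by
  classical
  cases p with
  | nil =>
    simp only [Walk.support_nil, List.mem_singleton] at hv
    exact (G.irrefl (hv ▸ hxv)).elim
  | cons h r =>
    rename_i c
    have hvx : v ≠ x := fun hh => G.irrefl (hh ▸ hxv)
    have hv' : v ∈ r.support := by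
      rw [Walk.support_cons] at hv
      rcases List.mem_cons.mp hv with hv | hv
      · exact absurd hv hvx
      · exact hv
    refine ⟨Walk.cons hxv (r.dropUntil v hv'), ?_, ?_⟩
    · have hlen : (r.takeUntil v hv').length + (r.dropUntil v hv').length = r.length := by
        conv_rhs => rw [← r.take_spec hv']
        rw [Walk.length_append]
      have ht : (r.takeUntil v hv').length ≠ 0 := by
        intro h0
        have hcv : c = v := Walk.eq_of_length_eq_zero h0
        subst hcv
        exact he (by rw [Walk.edges_cons]; exact List.mem_cons_self)
      simp only [Walk.length_cons]
      omega
    · intro w hw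
      rw [Walk.support_cons] at hw ⊢
      rcases List.mem_cons.mp hw with rfl | hw
      · exact List.mem_cons_self
      · exact List.mem_cons_of_mem _ (r.support_dropUntil_subset hv' hw)


lemma splice {u v : V} (huv : G.Adj u v) :
    ∀ {x y : V} (p : G.Walk x y), u ∈ p.support → v ∈ p.support → s(u, v) ∉ p.edges →
      ∃ q : G.Walk x y, q.length < p.length ∧ ∀ w ∈ q.support, w ∈ p.support := by
  intro x y p
  induction p with
  | nil =>
    intro hu hv _
    simp only [Walk.support_nil, List.mem_singleton] at hu hv
    exact (G.irrefl ((hu.trans hv.symm) ▸ huv)).elim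
  | cons h r ih =>
    rename_i x' c y'
    intro hu hv he
    by_cases hux : u = x'
    · subst hux
      exact splice_head _ huv hv he
    · by_cases hvx : v = x'
      · subst hvx
        obtain ⟨q, h1, h2⟩ := splice_head (Walk.cons h r) huv.symm hu
          (by rwa [Sym2.eq_swap] at he)
        exact ⟨q, h1, h2⟩
      · rw [Walk.support_cons] at hu hv
        have hu' : u ∈ r.support := by
          rcases List.mem_cons.mp hu with h' | h'
          · exact absurd h' hux
          · exact h'
        have hv' : v ∈ r.support := by
          rcases List.mem_cons.mp hv with h' | h'
          · exact absurd h' hvx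
          · exact h'
        have he' : s(u, v) ∉ r.edges := fun hh =>
          he (by rw [Walk.edges_cons]; exact List.mem_cons_of_mem _ hh)
        obtain ⟨q, h1, h2⟩ := ih hu' hv' he'
        refine ⟨Walk.cons h q, ?_, ?_⟩
        · simp only [Walk.length_cons]; omega
        · intro w hw
          rw [Walk.support_cons] at hw ⊢
          rcases List.mem_cons.mp hw with rfl | hw
          · exact List.mem_cons_self
          · exact List.mem_cons_of_mem _ (h2 w hw)

lemma exists_minimal_path {x y : V} (P : G.Walk x y → Prop)
    (hmono : ∀ w w' : G.Walk x y, (∀ z ∈ w'.support, z ∈ w.support) → P w → P w')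
    (w0 : G.Walk x y) (hw0 : P w0) :
    ∃ p : G.Walk x y, p.IsPath ∧ P p ∧ ∀ w, P w → p.length ≤ w.length := by
  classical
  have hex : ∃ n, ∃ w : G.Walk x y, P w ∧ w.length = n := ⟨w0.length, w0, hw0, rfl⟩
  obtain ⟨w, hw, hlen⟩ := Nat.find_spec hex
  refine ⟨w.bypass, w.bypass_isPath,
    hmono w w.bypass (fun z hz => w.support_bypass_subset hz) hw, fun w' hw' => ?_⟩
  have h1 : w.bypass.length ≤ w.length := w.length_bypass_le
  have h2 : Nat.find hex ≤ w'.length := Nat.find_min' hex ⟨w', hw', rfl⟩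
  omega

lemma walk_to_adj {S : Set V} {x : V} :
    ∀ {a c : V} (w : G.Walk a c), x ∈ w.support → x ≠ a → a ∉ S →
      (∀ v ∈ w.support, v ∉ S ∨ v = x) → ∃ y, G.Adj x y ∧ G.Reach S a y := by
  intro a c w
  induction w with
  | nil =>
    intro hx hxa _ _
    simp only [Walk.support_nil, List.mem_singleton] at hx
    exact absurd hx hxa
  | cons h r ih =>
    rename_i a' d c'
    intro hx hxa ha hS
    by_cases hdx : d = x
    · subst hdx
      exact ⟨a', h.symm, Reach.refl ha⟩
    · have hx' : x ∈ r.support := by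
        rcases List.mem_cons.mp (by rwa [Walk.support_cons] at hx) with h' | h'
        · exact absurd h' hxa
        · exact h'
      have hd : d ∉ S := by
        rcases hS d (by rw [Walk.support_cons]; exact List.mem_cons_of_mem _ r.start_mem_support)
          with h' | h'
        · exact h'
        · exact absurd h' hdx
      obtain ⟨y, h1, h2⟩ := ih hx' (fun hh => hdx hh.symm) hd
        (fun v hv => hS v (by rw [Walk.support_cons]; exact List.mem_cons_of_mem _ hv))
      exact ⟨y, h1, (Reach.adj ha hd h).trans h2⟩

lemma exists_adj_both {S : Set V} {a b x : V} (ha : a ∉ S) (hb : b ∉ S) (hx : x ∈ S)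
    (hsep : ¬ G.Reach S a b) (hr : G.Reach (S \ {x}) a b) :
    (∃ y, G.Adj x y ∧ G.Reach S a y) ∧ (∃ y, G.Adj x y ∧ G.Reach S b y) := by
  obtain ⟨w, hw⟩ := hr
  have hS : ∀ v ∈ w.support, v ∉ S ∨ v = x := by
    intro v hv
    have := hw v hv
    by_cases hvS : v ∈ S
    · right
      by_contra hne
      exact this (Set.mem_diff_singleton.mpr ⟨hvS, hne⟩)
    · exact Or.inl hvS
  have hxw : x ∈ w.support := by
    by_contra hxw
    refine hsep ⟨w, fun z hz hzS => ?_⟩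
    rcases hS z hz with h' | h'
    · exact h' hzS
    · exact hxw (h' ▸ hz)
  constructor
  · exact walk_to_adj w hxw (fun hh => ha (hh ▸ hx)) ha hS
  · refine walk_to_adj w.reverse ?_ (fun hh => hb (hh ▸ hx)) hb ?_
    · rwa [Walk.support_reverse, List.mem_reverse]
    · intro v hv
      exact hS v (by rwa [Walk.support_reverse, List.mem_reverse] at hv)


lemma sep_clique {S : Set V} {a b : V} (hG : G.IsChordal)
    (hsep : ¬ G.Reach S a b)
    (hnbr : ∀ x ∈ S, (∃ y, G.Adj x y ∧ G.Reach S a y) ∧ (∃ y, G.Adj x y ∧ G.Reach S b y)) :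
    ∀ x ∈ S, ∀ y ∈ S, x ≠ y → G.Adj x y := by
  intro x hxS y hyS hxy
  by_contra hnadj
  have hAB : ∀ v, G.Reach S a v → G.Reach S b v → False :=
    fun v h1 h2 => hsep (h1.trans h2.symm)
  -- build an initial walk from x to y through the component of a (resp. b)
  have build : ∀ c : V, (∀ z ∈ S, ∃ y', G.Adj z y' ∧ G.Reach S c y') →
      ∃ w0 : G.Walk x y, ∀ v ∈ w0.support, v = x ∨ v = y ∨ G.Reach S c v := by
    intro c hc
    obtain ⟨u, hxu, hcu⟩ := hc x hxS
    obtain ⟨u', hyu', hcu'⟩ := hc y hyS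
    obtain ⟨wm, hwm⟩ := hcu.symm.trans hcu'
    refine ⟨Walk.cons hxu (wm.concat hyu'.symm), ?_⟩
    intro v hv
    rw [Walk.support_cons] at hv
    rcases List.mem_cons.mp hv with rfl | hv
    · exact Or.inl rfl
    · rw [Walk.support_concat, List.mem_append,
        List.mem_singleton] at hv
      rcases hv with hv | rfl
      · exact Or.inr (Or.inr (hcu.trans (reach_of_mem_support hwm hv)))
      · exact Or.inr (Or.inl rfl)
  have hmono : ∀ (c : V) (w w' : G.Walk x y),
      (∀ z ∈ w'.support, z ∈ w.support) →
      (∀ v ∈ w.support, v = x ∨ v = y ∨ G.Reach S c v) →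
      (∀ v ∈ w'.support, v = x ∨ v = y ∨ G.Reach S c v) :=
    fun c w w' hsub hw v hv => hw v (hsub v hv)
  obtain ⟨w0a, hw0a⟩ := build a (fun z hz => (hnbr z hz).1)
  obtain ⟨p, hp, hpA, hpmin⟩ := exists_minimal_path _ (hmono a) w0a hw0a
  obtain ⟨w0b, hw0b⟩ := build b (fun z hz => (hnbr z hz).2)
  obtain ⟨q, hq, hqB, hqmin⟩ := exists_minimal_path _ (hmono b) w0b hw0b
  -- basic facts
  have hReach_notS : ∀ {c v : V}, G.Reach S c v → v ∉ S := fun h => h.not_mem_right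
  have hplen : 2 ≤ p.length := by
    rcases Nat.lt_or_ge p.length 2 with h | h
    · interval_cases hl : p.length
      · exact absurd (Walk.eq_of_length_eq_zero hl) hxy
      · exact absurd (Walk.adj_of_length_eq_one hl) hnadj
    · exact h
  have hqlen : 2 ≤ q.length := by
    rcases Nat.lt_or_ge q.length 2 with h | h
    · interval_cases hl : q.length
      · exact absurd (Walk.eq_of_length_eq_zero hl) hxy
      · exact absurd (Walk.adj_of_length_eq_one hl) hnadj
    · exact h
  have cross : ∀ v, v ∈ p.support → v ∈ q.support → v = x ∨ v = y := by
    intro v h1 h2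
    rcases hpA v h1 with rfl | rfl | hA
    · exact Or.inl rfl
    · exact Or.inr rfl
    rcases hqB v h2 with rfl | rfl | hB
    · exact Or.inl rfl
    · exact Or.inr rfl
    exact (hAB v hA hB).elim
  -- the cycle
  set c : G.Walk x x := p.append q.reverse with hc
  have hclen : c.length = p.length + q.length := by
    rw [hc, Walk.length_append, Walk.length_reverse]
  have hmemc : ∀ v, v ∈ c.support → v ∈ p.support ∨ v ∈ q.support := by
    intro v hv
    rcases (Walk.mem_support_append_iff _ _).mp hv with h | h
    · exact Or.inl h
    · right; rwa [Walk.support_reverse, List.mem_reverse] at h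
  have hedgec : ∀ e, e ∈ c.edges ↔ e ∈ p.edges ∨ e ∈ q.edges := by
    intro e
    rw [hc, Walk.edges_append, List.mem_append, Walk.edges_reverse, List.mem_reverse]
  have hcyc : c.IsCycle := by
    rw [Walk.isCycle_def]
    refine ⟨?_, ?_, ?_⟩
    · rw [Walk.isTrail_def, hc, Walk.edges_append, Walk.edges_reverse]
      refine List.Nodup.append hp.isTrail.edges_nodup (List.nodup_reverse.mpr hq.isTrail.edges_nodup) ?_
      intro e hep heq
      rw [List.mem_reverse] at heq
      induction e with
      | h u v =>
        have hup : u ∈ p.support := p.fst_mem_support_of_mem_edges hep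
        have hvp : v ∈ p.support := p.snd_mem_support_of_mem_edges hep
        have huq : u ∈ q.support := q.fst_mem_support_of_mem_edges heq
        have hvq : v ∈ q.support := q.snd_mem_support_of_mem_edges heq
        have hadj : G.Adj u v := p.edges_subset_edgeSet hep
        rcases cross u hup huq with rfl | rfl
        · rcases cross v hvp hvq with rfl | rfl
          · exact G.irrefl hadj
          · exact hnadj hadj
        · rcases cross v hvp hvq with rfl | rfl
          · exact hnadj hadj.symm
          · exact G.irrefl hadj
    · intro hnil
      have : c.length = 0 := by rw [hnil]; rfl
      omega
    · have htail : c.support.tail = p.support.tail ++ q.reverse.support.tail := by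
        rw [hc, Walk.support_append]
        conv_lhs => rw [p.support_eq_cons]
        rw [List.cons_append, List.tail_cons]
      rw [htail]
      have hpn := hp.support_nodup
      have hqn := hq.reverse.support_nodup
      rw [p.support_eq_cons, List.nodup_cons] at hpn
      rw [q.reverse.support_eq_cons, List.nodup_cons] at hqn
      refine List.Nodup.append hpn.2 hqn.2 ?_
      intro z hz1 hz2
      have hz1' : z ∈ p.support := List.mem_of_mem_tail hz1
      have hz2' : z ∈ q.support := by
        have := List.mem_of_mem_tail hz2
        rwa [Walk.support_reverse, List.mem_reverse] at this
      rcases cross z hz1' hz2' with rfl | rfl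
      · exact hpn.1 hz1
      · exact hqn.1 hz2
  obtain ⟨u, v, hus, hvs, huv, hne⟩ := hG x c hcyc (by omega)
  -- case analysis on the chord
  have contradict_p : u ∈ p.support → v ∈ p.support → False := by
    intro h1 h2
    have hne' : s(u, v) ∉ p.edges := fun hh => hne ((hedgec _).mpr (Or.inl hh))
    obtain ⟨p', hl', hs'⟩ := splice huv p h1 h2 hne'
    exact absurd (hpmin p' (hmono a p p' hs' hpA)) (by omega)
  have contradict_q : u ∈ q.support → v ∈ q.support → False := by
    intro h1 h2
    have hne' : s(u, v) ∉ q.edges := fun hh => hne ((hedgec _).mpr (Or.inr hh))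
    obtain ⟨q', hl', hs'⟩ := splice huv q h1 h2 hne'
    exact absurd (hqmin q' (hmono b q q' hs' hqB)) (by omega)
  have cross_contra : ∀ u' v', G.Adj u' v' → u' ∈ p.support → u' ∉ q.support →
      v' ∈ q.support → v' ∉ p.support → False := by
    intro u' v' hadj h1 h2 h3 h4
    have hA : G.Reach S a u' := by
      rcases hpA u' h1 with rfl | rfl | h
      · exact absurd q.start_mem_support h2
      · exact absurd q.end_mem_support h2
      · exact h
    have hB : G.Reach S b v' := by
      rcases hqB v' h3 with rfl | rfl | h
      · exact absurd p.start_mem_support h4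
      · exact absurd p.end_mem_support h4
      · exact h
    exact hsep (hA.trans ((Reach.adj hA.not_mem_right hB.not_mem_right hadj).trans hB.symm))
  by_cases hu1 : u ∈ p.support <;> by_cases hv1 : v ∈ p.support
  · exact contradict_p hu1 hv1
  · have hv2 : v ∈ q.support := (hmemc v hvs).resolve_left hv1
    by_cases hu2 : u ∈ q.support
    · exact contradict_q hu2 hv2
    · exact cross_contra u v huv hu1 hu2 hv2 hv1
  · have hu2 : u ∈ q.support := (hmemc u hus).resolve_left hu1
    by_cases hv2 : v ∈ q.support
    · exact contradict_q hu2 hv2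
    · exact cross_contra v u huv.symm hv1 hv2 hu2 hu1
  · have hu2 : u ∈ q.support := (hmemc u hus).resolve_left hu1
    have hv2 : v ∈ q.support := (hmemc v hvs).resolve_left hv1
    exact contradict_q hu2 hv2


lemma IsChordal.induce (hG : G.IsChordal) (s : Set V) : (G.induce s).IsChordal := by
  intro v w hcyc hlen
  let f : G.induce s ↪g G := Embedding.induce s
  have hcyc' : (w.map f.toHom).IsCycle :=
    (Walk.map_isCycle_iff_of_injective f.injective).mpr hcyc
  have hlen' : 4 ≤ (w.map f.toHom).length := by rwa [Walk.length_map]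
  obtain ⟨a, b, ha, hb, hadj, hne⟩ := hG (f v) (w.map f.toHom) hcyc' hlen'
  rw [Walk.support_map] at ha hb
  obtain ⟨a0, ha0, rfl⟩ := List.mem_map.mp ha
  obtain ⟨b0, hb0, rfl⟩ := List.mem_map.mp hb
  refine ⟨a0, b0, ha0, hb0, f.map_adj_iff.mp hadj, fun hh => hne ?_⟩
  rw [Walk.edges_map]
  exact List.mem_map.mpr ⟨s(a0, b0), hh, Sym2.map_pair_eq f _ _⟩

lemma simplicial_lift {s : Set V} (u : ↑s) (hn : ∀ v, G.Adj ↑u v → v ∈ s)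
    (hs : (G.induce s).IsSimplicialVertex u) : G.IsSimplicialVertex ↑u := by
  intro v hv w hw hvw
  have hva : G.Adj ↑u v := hv
  have hwa : G.Adj ↑u w := hw
  have hv' : (⟨v, hn v hva⟩ : ↑s) ∈ (G.induce s).neighborSet u := hva
  have hw' : (⟨w, hn w hwa⟩ : ↑s) ∈ (G.induce s).neighborSet u := hwa
  have := hs hv' hw' (fun hh => hvw (congrArg Subtype.val hh))
  exact this

universe u

lemma side_lemma {n : ℕ}
    (IH : ∀ (W : Type u) [Fintype W] (H : SimpleGraph W), Fintype.card W ≤ n → H.IsChordal →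
       Nonempty W → (∀ u w : W, u ≠ w → H.Adj u w) ∨
       ∃ u w : W, u ≠ w ∧ ¬H.Adj u w ∧ H.IsSimplicialVertex u ∧ H.IsSimplicialVertex w)
    {V : Type u} [Fintype V] {G : SimpleGraph V} (hG : G.IsChordal) {S : Set V} {a b : V}
    (hcard : Fintype.card V ≤ n + 1)
    (ha : a ∉ S) (hb : b ∉ S) (hsep : ¬ G.Reach S a b)
    (hclique : ∀ x ∈ S, ∀ y ∈ S, x ≠ y → G.Adj x y) :
    ∃ u, G.Reach S a u ∧ G.IsSimplicialVertex u := by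
  classical
  set t : Set V := {v | G.Reach S a v} ∪ S with ht
  have hat : a ∈ t := Or.inl (Reach.refl ha)
  have hbt : b ∉ t := by
    rintro (h | h)
    · exact hsep h
    · exact hb h
  have hnbr : ∀ u : V, G.Reach S a u → ∀ v, G.Adj (↑u) v → v ∈ t := by
    intro u hu v hv
    by_cases hvS : v ∈ S
    · exact Or.inr hvS
    · exact Or.inl (hu.trans (Reach.adj hu.not_mem_right hvS hv))
  have hcard' : Fintype.card ↑t ≤ n := by
    have hlt : Fintype.card ↑t < Fintype.card V := by
      refine Fintype.card_lt_of_injective_of_notMem (Subtype.val : ↑t → V)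
        Subtype.val_injective (b := b) ?_
      rw [Subtype.range_coe]
      exact hbt
    omega
  rcases IH ↑t (G.induce t) hcard' (hG.induce t) ⟨⟨a, hat⟩⟩ with hcomp |
    ⟨u, w, huw, hnadj, hsu, hsw⟩
  · refine ⟨a, Reach.refl ha, simplicial_lift ⟨a, hat⟩ (hnbr a (Reach.refl ha)) ?_⟩
    intro v hv w hw hvw
    exact hcomp v w hvw
  · have hmemA : ∀ z : ↑t, (z : V) ∉ S → G.Reach S a ↑z := by
      intro z hz
      rcases z.2 with h | h
      · exact h
      · exact absurd h hz
    by_cases huS : (u : V) ∈ S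
    · by_cases hwS : (w : V) ∈ S
      · refine absurd ?_ hnadj
        exact hclique ↑u huS ↑w hwS (fun h => huw (Subtype.ext h))
      · have hrw : G.Reach S a ↑w := hmemA w hwS
        exact ⟨↑w, hrw, simplicial_lift w (hnbr ↑w hrw) hsw⟩
    · have hru : G.Reach S a ↑u := hmemA u huS
      exact ⟨↑u, hru, simplicial_lift u (hnbr ↑u hru) hsu⟩

lemma dirac : ∀ (n : ℕ) (V : Type u) [Fintype V] (G : SimpleGraph V), Fintype.card V ≤ n →
    G.IsChordal → Nonempty V →
    (∀ u w : V, u ≠ w → G.Adj u w) ∨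
      ∃ u w : V, u ≠ w ∧ ¬G.Adj u w ∧ G.IsSimplicialVertex u ∧ G.IsSimplicialVertex w := by
  intro n
  induction n with
  | zero =>
    intro V _ G hcard _ hne
    have : 0 < Fintype.card V := @Fintype.card_pos V _ hne
    omega
  | succ n ih =>
    intro V _ G hcard hG hne
    classical
    by_cases hcomp : ∀ u w : V, u ≠ w → G.Adj u w
    · exact Or.inl hcomp
    right
    push_neg at hcomp
    obtain ⟨a, b, hab, hnadj⟩ := hcomp
    have hsep0 : ∃ T : Finset V, a ∉ T ∧ b ∉ T ∧ ¬ G.Reach ↑T a b := by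
      refine ⟨Finset.univ \ {a, b}, by simp, by simp, ?_⟩
      rintro ⟨w, hw⟩
      have hmem : ∀ z ∈ w.support, z = a ∨ z = b := by
        intro z hz
        have := hw z hz
        simp only [Finset.coe_sdiff, Finset.coe_univ, Set.mem_diff, Set.mem_univ, true_and,
          not_not, Finset.coe_insert, Finset.coe_singleton, Set.mem_insert_iff,
          Set.mem_singleton_iff] at this
        exact this
      cases w with
      | nil => exact hab rfl
      | cons h r =>
        rename_i d
        have hd : d ∈ (Walk.cons h r).support := by
          rw [Walk.support_cons]
          exact List.mem_cons_of_mem _ r.start_mem_support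
        rcases hmem d hd with h1 | h1
        · exact G.irrefl (h1 ▸ h)
        · exact hnadj (h1 ▸ h)
    have hexn : ∃ m, ∃ T : Finset V, (a ∉ T ∧ b ∉ T ∧ ¬ G.Reach ↑T a b) ∧ T.card = m := by
      obtain ⟨T, hT⟩ := hsep0
      exact ⟨T.card, T, hT, rfl⟩
    obtain ⟨T, ⟨haT, hbT, hsepT⟩, hTcard⟩ := Nat.find_spec hexn
    have hmin : ∀ x ∈ T, G.Reach ↑(T.erase x) a b := by
      intro x hx
      by_contra h4
      have h5 : Nat.find hexn ≤ (T.erase x).card :=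
        Nat.find_min' hexn ⟨T.erase x,
          ⟨fun h => haT (Finset.mem_of_mem_erase h),
           fun h => hbT (Finset.mem_of_mem_erase h), h4⟩, rfl⟩
      have h6 : (T.erase x).card < T.card := Finset.card_erase_lt_of_mem hx
      omega
    have haT' : a ∉ (↑T : Set V) := by simpa using haT
    have hbT' : b ∉ (↑T : Set V) := by simpa using hbT
    have hnbrs : ∀ x ∈ (↑T : Set V),
        (∃ y, G.Adj x y ∧ G.Reach ↑T a y) ∧ (∃ y, G.Adj x y ∧ G.Reach ↑T b y) := by
      intro x hx
      have hx' : x ∈ T := by simpa using hx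
      have hr : G.Reach ((↑T : Set V) \ {x}) a b := by
        have := hmin x hx'
        rwa [Finset.coe_erase] at this
      exact exists_adj_both haT' hbT' hx hsepT hr
    have hclique : ∀ x ∈ (↑T : Set V), ∀ y ∈ (↑T : Set V), x ≠ y → G.Adj x y :=
      sep_clique hG hsepT hnbrs
    obtain ⟨u, hu, hsu⟩ := side_lemma ih hG hcard haT' hbT' hsepT hclique
    have hsepT' : ¬ G.Reach ↑T b a := fun h => hsepT h.symm
    have hclique' : ∀ x ∈ (↑T : Set V), ∀ y ∈ (↑T : Set V), x ≠ y → G.Adj x y := hclique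
    obtain ⟨w, hw, hsw⟩ := side_lemma ih hG hcard hbT' haT' hsepT' hclique'
    have hne' : u ≠ w := by
      rintro rfl
      exact hsepT (hu.trans hw.symm)
    have hnadj' : ¬ G.Adj u w := by
      intro hadj
      exact hsepT (hu.trans ((Reach.adj hu.not_mem_right hw.not_mem_right hadj).trans hw.symm))
    exact ⟨u, w, hne', hnadj', hsu, hsw⟩

end SimpleGraph

theorem chordal_exists_simplicial {V : Type*} [Fintype V] [Nonempty V] (G : SimpleGraph V)
    (hG : G.IsChordal) :
    ∃ v : V, G.IsSimplicialVertex v := by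
  rcases SimpleGraph.dirac (Fintype.card V) V G le_rfl hG ‹Nonempty V› with h |
    ⟨u, _, _, _, hsu, _⟩
  · obtain ⟨v⟩ := ‹Nonempty V›
    refine ⟨v, ?_⟩
    intro x hx y hy hxy
    exact h x y hxy
  · exact ⟨u, hsu⟩
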